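/- Suppose M = 2, 0 ∈ S_1 ∩ S_2, n ∈ S_1 ∩ S_2, and S_1 ∪ S_2 = N₀. Then Ŝ equals the collection of all S ⊆ N₀ of the form S = (S_1 ∩ S_2) ∪ {j ∈ S_1 \ S_2 : j ≥ i_1} ∪ {j ∈ S_2 \ S_1 : j ≥ i_2} for some i_1 ∈ (S_1 \ S_2) ∪ {n} and some i_2 ∈ (S_2 \ S_1) ∪ {n}, where the comparisons j ≥ i_1 and j ≥ i_2 are between product indices in {0,1,…,n}. -/
import Mathlib


namespace RobustAssortment

/-- `i` is the most preferred product of the assortment `S` under the ranking `σ`. -/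
def isTop {n : ℕ} (σ : Equiv.Perm (Fin (n + 1))) (S : Finset (Fin (n + 1)))
    (i : Fin (n + 1)) : Prop :=
  i ∈ S ∧ ∀ j ∈ S, σ i ≤ σ j

instance {n : ℕ} (σ : Equiv.Perm (Fin (n + 1))) (S : Finset (Fin (n + 1)))
    (i : Fin (n + 1)) : Decidable (isTop σ S i) := by
  unfold isTop; infer_instance
/-- The collection `Ŝ` of candidate assortments. -/
def Shat {n M : ℕ} (Sm : Fin M → Finset (Fin (n + 1))) (r : Fin (n + 1) → ℝ)
    (S : Finset (Fin (n + 1))) : Prop :=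
  0 ∈ S ∧ ∀ i' ∈ S, ∀ i : Fin (n + 1), r i' < r i →
    (∀ m : Fin M, i' ∈ Sm m → i ∈ Sm m) → i ∈ S

/-- Lemma 1 of the paper: closed form of `Ŝ` for two past assortments. -/
theorem statement4 (n : ℕ) (hn : 1 ≤ n)
    (r : Fin (n + 1) → ℝ) (hr0 : r 0 = 0) (hr : StrictMono r)
    (S1 S2 : Finset (Fin (n + 1)))
    (h01 : (0 : Fin (n + 1)) ∈ S1) (h02 : (0 : Fin (n + 1)) ∈ S2)
    (hn1 : Fin.last n ∈ S1) (hn2 : Fin.last n ∈ S2)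
    (hu : S1 ∪ S2 = Finset.univ) :
    ∀ S : Finset (Fin (n + 1)),
      Shat ![S1, S2] r S ↔
        ∃ i1 ∈ (S1 \ S2) ∪ {Fin.last n}, ∃ i2 ∈ (S2 \ S1) ∪ {Fin.last n},
          S = (S1 ∩ S2) ∪ (S1 \ S2).filter (fun j => i1 ≤ j)
              ∪ (S2 \ S1).filter (fun j => i2 ≤ j) := by
  have hboth : ∀ x : Fin (n + 1), x ∈ S1 ∨ x ∈ S2 := by
    intro x
    have := Finset.mem_univ x
    rw [← hu, Finset.mem_union] at this
    exact this
  intro S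
  constructor
  · rintro ⟨h0S, hclosed⟩
    have hAS : S1 ∩ S2 ⊆ S := by
      intro x hx
      rw [Finset.mem_inter] at hx
      rcases eq_or_ne x 0 with rfl | hx0
      · exact h0S
      · refine hclosed 0 h0S x (hr (Fin.pos_of_ne_zero hx0)) ?_
        intro m
        fin_cases m <;> simp [hx.1, hx.2]
    have hup1 : ∀ i' ∈ S, i' ∈ S1 \ S2 → ∀ x ∈ S1 \ S2, i' ≤ x → x ∈ S := by
      intro i' hi'S hi'B x hxB hle
      rcases eq_or_lt_of_le hle with rfl | hlt
      · exact hi'S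
      · rw [Finset.mem_sdiff] at hi'B hxB
        refine hclosed i' hi'S x (hr hlt) ?_
        intro m
        fin_cases m <;> simp [hxB.1, hi'B.2]
    have hup2 : ∀ i' ∈ S, i' ∈ S2 \ S1 → ∀ x ∈ S2 \ S1, i' ≤ x → x ∈ S := by
      intro i' hi'S hi'B x hxB hle
      rcases eq_or_lt_of_le hle with rfl | hlt
      · exact hi'S
      · rw [Finset.mem_sdiff] at hi'B hxB
        refine hclosed i' hi'S x (hr hlt) ?_
        intro m
        fin_cases m <;> simp [hxB.1, hi'B.2]
    obtain ⟨i1, hi1mem, hi1prop⟩ :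
        ∃ i1, i1 ∈ (S1 \ S2) ∪ {Fin.last n} ∧ ∀ x ∈ S1 \ S2, (x ∈ S ↔ i1 ≤ x) := by
      by_cases hB : (S ∩ (S1 \ S2)).Nonempty
      · set i1 := (S ∩ (S1 \ S2)).min' hB with hdef
        have hi1 := (S ∩ (S1 \ S2)).min'_mem hB
        rw [Finset.mem_inter] at hi1
        refine ⟨i1, Finset.mem_union_left _ hi1.2, ?_⟩
        intro x hxB
        constructor
        · intro hxS
          exact Finset.min'_le _ x (Finset.mem_inter.mpr ⟨hxS, hxB⟩)
        · intro hle
          exact hup1 i1 hi1.1 hi1.2 x hxB hle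
      · refine ⟨Fin.last n, Finset.mem_union_right _ (Finset.mem_singleton_self _), ?_⟩
        intro x hxB
        constructor
        · intro hxS
          exact absurd ⟨x, Finset.mem_inter.mpr ⟨hxS, hxB⟩⟩ hB
        · intro hle
          have hx : x = Fin.last n := le_antisymm (Fin.le_last x) hle
          rw [Finset.mem_sdiff] at hxB
          exact absurd (hx ▸ hn2) hxB.2
    obtain ⟨i2, hi2mem, hi2prop⟩ :
        ∃ i2, i2 ∈ (S2 \ S1) ∪ {Fin.last n} ∧ ∀ x ∈ S2 \ S1, (x ∈ S ↔ i2 ≤ x) := by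
      by_cases hC : (S ∩ (S2 \ S1)).Nonempty
      · set i2 := (S ∩ (S2 \ S1)).min' hC with hdef
        have hi2 := (S ∩ (S2 \ S1)).min'_mem hC
        rw [Finset.mem_inter] at hi2
        refine ⟨i2, Finset.mem_union_left _ hi2.2, ?_⟩
        intro x hxB
        constructor
        · intro hxS
          exact Finset.min'_le _ x (Finset.mem_inter.mpr ⟨hxS, hxB⟩)
        · intro hle
          exact hup2 i2 hi2.1 hi2.2 x hxB hle
      · refine ⟨Fin.last n, Finset.mem_union_right _ (Finset.mem_singleton_self _), ?_⟩
        intro x hxB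
        constructor
        · intro hxS
          exact absurd ⟨x, Finset.mem_inter.mpr ⟨hxS, hxB⟩⟩ hC
        · intro hle
          have hx : x = Fin.last n := le_antisymm (Fin.le_last x) hle
          rw [Finset.mem_sdiff] at hxB
          exact absurd (hx ▸ hn1) hxB.2
    refine ⟨i1, hi1mem, i2, hi2mem, ?_⟩
    ext x
    simp only [Finset.mem_union, Finset.mem_filter, Finset.mem_inter, Finset.mem_sdiff]
    constructor
    · intro hxS
      by_cases h1 : x ∈ S1 <;> by_cases h2 : x ∈ S2
      · exact Or.inl (Or.inl ⟨h1, h2⟩)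
      · exact Or.inl (Or.inr ⟨⟨h1, h2⟩, (hi1prop x (Finset.mem_sdiff.mpr ⟨h1, h2⟩)).mp hxS⟩)
      · exact Or.inr ⟨⟨h2, h1⟩, (hi2prop x (Finset.mem_sdiff.mpr ⟨h2, h1⟩)).mp hxS⟩
      · rcases hboth x with h | h <;> exact absurd h (by assumption)
    · rintro ((⟨h1, h2⟩ | ⟨hB, hle⟩) | ⟨hC, hle⟩)
      · exact hAS (Finset.mem_inter.mpr ⟨h1, h2⟩)
      · exact (hi1prop x (Finset.mem_sdiff.mpr hB)).mpr hle
      · exact (hi2prop x (Finset.mem_sdiff.mpr hC)).mpr hle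
  · rintro ⟨i1, hi1, i2, hi2, rfl⟩
    constructor
    · exact Finset.mem_union_left _ (Finset.mem_union_left _
        (Finset.mem_inter.mpr ⟨h01, h02⟩))
    · intro i' hi' i hri hm
      have hlt : i' < i := hr.lt_iff_lt.mp hri
      have hm1 : i' ∈ S1 → i ∈ S1 := by
        have := hm 0; simpa using this
      have hm2 : i' ∈ S2 → i ∈ S2 := by
        have := hm 1; simpa using this
      simp only [Finset.mem_union, Finset.mem_filter, Finset.mem_inter,
        Finset.mem_sdiff] at hi' ⊢
      rcases hi' with ((⟨h1, h2⟩ | ⟨⟨h1, h2⟩, hle⟩) | ⟨⟨h2, h1⟩, hle⟩)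
      · exact Or.inl (Or.inl ⟨hm1 h1, hm2 h2⟩)
      · have hi1' : i ∈ S1 := hm1 h1
        by_cases hiS2 : i ∈ S2
        · exact Or.inl (Or.inl ⟨hi1', hiS2⟩)
        · exact Or.inl (Or.inr ⟨⟨hi1', hiS2⟩, (hle.trans hlt.le)⟩)
      · have hi2' : i ∈ S2 := hm2 h2
        by_cases hiS1 : i ∈ S1
        · exact Or.inl (Or.inl ⟨hiS1, hi2'⟩)
        · exact Or.inr ⟨⟨hi2', hiS1⟩, (hle.trans hlt.le)⟩


end RobustAssortment
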